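/- arXiv:1501.04853 — 3 statements merged into one kernel-verified Lean document; each statement's English description precedes it below -/
import Mathlib

section
/- Let n ≥ 1, T > 0, and let Ψ : ℝ → GL(2n, ℝ) take values in the symplectic group of the standard symplectic form on ℝ^{2n}, with Ψ(0) = Id, Ψ(t + T) = Ψ(t) · Ψ(T) for all t ∈ ℝ, and Ψ(−t) = I · Ψ(t) · I for all t ∈ ℝ. Then ker(Ψ(T) − Id) = {0} if and only if both Ψ(T/2)(ℝⁿ ⊕ 0) ∩ (ℝⁿ ⊕ 0) = {0} and Ψ(T/2)(0 ⊕ ℝⁿ) ∩ (0 ⊕ ℝⁿ) = {0}. -/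
open Matrix

/-- The standard complex structure `J₀ = [[0, -Idₙ], [Idₙ, 0]]` on `ℝ^{2n} = ℝⁿ ⊕ ℝⁿ`. -/
noncomputable def J0 (n : ℕ) : Matrix (Fin n ⊕ Fin n) (Fin n ⊕ Fin n) ℝ :=
  Matrix.fromBlocks 0 (-1) 1 0

/-- The block-diagonal involution `I = diag(Idₙ, -Idₙ)`. -/
noncomputable def Imat (n : ℕ) : Matrix (Fin n ⊕ Fin n) (Fin n ⊕ Fin n) ℝ :=
  Matrix.fromBlocks 1 0 0 (-1)

/-- The subspace `ℝⁿ ⊕ 0` of `ℝ^{2n} = ℝⁿ ⊕ ℝⁿ`. -/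
noncomputable def realAxis (n : ℕ) : Submodule ℝ ((Fin n ⊕ Fin n) → ℝ) :=
  LinearMap.ker (LinearMap.funLeft ℝ ℝ (Sum.inr : Fin n → Fin n ⊕ Fin n))

/-- The subspace `0 ⊕ ℝⁿ` of `ℝ^{2n} = ℝⁿ ⊕ ℝⁿ`. -/
noncomputable def imagAxis (n : ℕ) : Submodule ℝ ((Fin n ⊕ Fin n) → ℝ) :=
  LinearMap.ker (LinearMap.funLeft ℝ ℝ (Sum.inl : Fin n → Fin n ⊕ Fin n))

lemma Imat_mul_Imat (n : ℕ) : Imat n * Imat n = 1 := by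
  simp [Imat, Matrix.fromBlocks_multiply, ← Matrix.fromBlocks_one]

lemma J0_mul_J0 (n : ℕ) : J0 n * J0 n = -1 := by
  simp only [J0, Matrix.fromBlocks_multiply]
  rw [show (-1 : Matrix (Fin n ⊕ Fin n) (Fin n ⊕ Fin n) ℝ) = -(1 : Matrix _ _ ℝ) from rfl,
    ← Matrix.fromBlocks_one, Matrix.fromBlocks_neg]
  norm_num

lemma J0_det_ne_zero (n : ℕ) : (J0 n).det ≠ 0 := by
  intro h
  have h2 : (J0 n * J0 n).det = ((-1 : Matrix (Fin n ⊕ Fin n) (Fin n ⊕ Fin n) ℝ)).det := by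
    rw [J0_mul_J0]
  rw [Matrix.det_mul, h, mul_zero] at h2
  have : ((-1 : Matrix (Fin n ⊕ Fin n) (Fin n ⊕ Fin n) ℝ)).det = 1 := by
    have : ((-1 : Matrix (Fin n ⊕ Fin n) (Fin n ⊕ Fin n) ℝ)) = -(1 : Matrix _ _ ℝ) := rfl
    rw [this, Matrix.det_neg, Matrix.det_one, mul_one]
    simp [Fintype.card_sum, Even.neg_one_pow ⟨n, rfl⟩]
  rw [this] at h2
  exact one_ne_zero h2.symm

lemma mem_realAxis (n : ℕ) (x : (Fin n ⊕ Fin n) → ℝ) :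
    x ∈ realAxis n ↔ ∀ i, x (Sum.inr i) = 0 := by
  simp [realAxis, LinearMap.mem_ker, funext_iff, LinearMap.funLeft]

lemma mem_imagAxis (n : ℕ) (x : (Fin n ⊕ Fin n) → ℝ) :
    x ∈ imagAxis n ↔ ∀ i, x (Sum.inl i) = 0 := by
  simp [imagAxis, LinearMap.mem_ker, funext_iff, LinearMap.funLeft]

lemma Imat_mulVec_inl (n : ℕ) (x : (Fin n ⊕ Fin n) → ℝ) (i : Fin n) :
    (Imat n *ᵥ x) (Sum.inl i) = x (Sum.inl i) := by
  rw [Imat, Matrix.fromBlocks_mulVec]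
  simp

lemma Imat_mulVec_inr (n : ℕ) (x : (Fin n ⊕ Fin n) → ℝ) (i : Fin n) :
    (Imat n *ᵥ x) (Sum.inr i) = -(x (Sum.inr i)) := by
  rw [Imat, Matrix.fromBlocks_mulVec]
  simp [Matrix.neg_mulVec]

/-- A symplectic path `Ψ` with `Ψ(0) = Id`, `Ψ(t+T) = Ψ(t)Ψ(T)` and `Ψ(-t) = IΨ(t)I`
is nondegenerate at time `T` iff both Lagrangian boundary problems at time `T/2`
are nondegenerate. -/
theorem stmt0 (n : ℕ) (hn : 1 ≤ n) (T : ℝ) (hT : 0 < T)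
    (Ψ : ℝ → Matrix (Fin n ⊕ Fin n) (Fin n ⊕ Fin n) ℝ)
    (hsymp : ∀ t, (Ψ t)ᵀ * J0 n * Ψ t = J0 n)
    (h0 : Ψ 0 = 1)
    (hper : ∀ t, Ψ (t + T) = Ψ t * Ψ T)
    (hsym : ∀ t, Ψ (-t) = Imat n * Ψ t * Imat n) :
    LinearMap.ker (Ψ T - 1).mulVecLin = ⊥ ↔
      ((realAxis n).map (Ψ (T / 2)).mulVecLin ⊓ realAxis n = ⊥ ∧
        (imagAxis n).map (Ψ (T / 2)).mulVecLin ⊓ imagAxis n = ⊥) := by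
  set A := Ψ (T / 2) with hAdef
  -- A is invertible
  have hdet : IsUnit A.det := by
    have h := congrArg Matrix.det (hsymp (T / 2))
    rw [Matrix.det_mul, Matrix.det_mul, Matrix.det_transpose] at h
    rw [isUnit_iff_ne_zero]
    intro h0'
    rw [← hAdef] at h
    rw [h0', mul_zero] at h
    exact J0_det_ne_zero n h.symm
  have hAinv : A⁻¹ * A = 1 := Matrix.nonsing_inv_mul A hdet
  have hAinv' : A * A⁻¹ = 1 := Matrix.mul_nonsing_inv A hdet
  have hII := Imat_mul_Imat n
  -- Ψ T = I * A⁻¹ * I * A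
  have cI : ∀ M : Matrix (Fin n ⊕ Fin n) (Fin n ⊕ Fin n) ℝ, Imat n * (Imat n * M) = M :=
    fun M => by rw [← Matrix.mul_assoc, hII, Matrix.one_mul]
  have cA : ∀ M : Matrix (Fin n ⊕ Fin n) (Fin n ⊕ Fin n) ℝ, A⁻¹ * (A * M) = M :=
    fun M => by rw [← Matrix.mul_assoc, hAinv, Matrix.one_mul]
  have cA' : ∀ M : Matrix (Fin n ⊕ Fin n) (Fin n ⊕ Fin n) ℝ, A * (A⁻¹ * M) = M :=
    fun M => by rw [← Matrix.mul_assoc, hAinv', Matrix.one_mul]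
  -- Ψ T = I * A⁻¹ * I * A
  have hB : Ψ T = Imat n * A⁻¹ * Imat n * A := by
    have h1 : A = Imat n * A * Imat n * Ψ T := by
      have := hper (-(T / 2))
      rw [hsym (T / 2)] at this
      rw [show -(T / 2) + T = T / 2 by ring] at this
      exact this
    have h2 := congrArg (fun M => Imat n * A⁻¹ * Imat n * M) h1
    simp only [Matrix.mul_assoc] at h2
    rw [cI, cA, cI] at h2
    rw [show Imat n * A⁻¹ * Imat n * A = Imat n * (A⁻¹ * (Imat n * A)) by
      simp only [Matrix.mul_assoc]]
    exact h2.symm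
  -- fixed points of Ψ T ↔ commuting condition
  have key : ∀ x, Ψ T *ᵥ x = x ↔ (Imat n * A) *ᵥ x = (A * Imat n) *ᵥ x := by
    intro x
    constructor
    · intro h
      have h2 := congrArg (fun y => (A * Imat n) *ᵥ y) h
      rw [Matrix.mulVec_mulVec, hB] at h2
      have e1 : A * Imat n * (Imat n * A⁻¹ * Imat n * A) = Imat n * A := by
        simp only [Matrix.mul_assoc]
        rw [cI, cA']
      rw [e1] at h2
      exact h2
    · intro h
      have h2 := congrArg (fun y => (Imat n * A⁻¹) *ᵥ y) h
      rw [Matrix.mulVec_mulVec, Matrix.mulVec_mulVec] at h2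
      have e2 : Imat n * A⁻¹ * (Imat n * A) = Ψ T := by
        rw [hB]; simp only [Matrix.mul_assoc]
      have e3 : Imat n * A⁻¹ * (A * Imat n) = 1 := by
        simp only [Matrix.mul_assoc]
        rw [cA]
        exact hII
      rw [e2, e3, Matrix.one_mulVec] at h2
      exact h2
  -- decomposition: for x, let u and v be the two "halves"
  -- characterize the commuting condition componentwise
  have key2 : ∀ x : (Fin n ⊕ Fin n) → ℝ, (Imat n * A) *ᵥ x = (A * Imat n) *ᵥ x ↔
      ((A *ᵥ Sum.elim (x ∘ Sum.inl) 0) ∈ realAxis n ∧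
       (A *ᵥ Sum.elim 0 (x ∘ Sum.inr)) ∈ imagAxis n) := by
    intro x
    set u : (Fin n ⊕ Fin n) → ℝ := Sum.elim (x ∘ Sum.inl) 0 with hu
    set v : (Fin n ⊕ Fin n) → ℝ := Sum.elim 0 (x ∘ Sum.inr) with hv
    have hxuv : x = u + v := by
      funext j
      cases j <;> simp [hu, hv]
    have hIx : Imat n *ᵥ x = u - v := by
      funext j
      cases j with
      | inl i => rw [Imat_mulVec_inl]; simp [hu, hv]
      | inr i => rw [Imat_mulVec_inr]; simp [hu, hv]
    rw [← Matrix.mulVec_mulVec, ← Matrix.mulVec_mulVec, hIx]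
    rw [Matrix.mulVec_sub]
    constructor
    · intro h
      constructor
      · rw [mem_realAxis]
        intro i
        have hi := congrFun h (Sum.inr i)
        rw [Imat_mulVec_inr] at hi
        have hx : (A *ᵥ x) (Sum.inr i) = (A *ᵥ u) (Sum.inr i) + (A *ᵥ v) (Sum.inr i) := by
          rw [hxuv, Matrix.mulVec_add]; rfl
        simp only [Pi.sub_apply] at hi
        rw [hx] at hi
        linarith
      · rw [mem_imagAxis]
        intro i
        have hi := congrFun h (Sum.inl i)
        rw [Imat_mulVec_inl] at hi
        have hx : (A *ᵥ x) (Sum.inl i) = (A *ᵥ u) (Sum.inl i) + (A *ᵥ v) (Sum.inl i) := by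
          rw [hxuv, Matrix.mulVec_add]; rfl
        simp only [Pi.sub_apply] at hi
        rw [hx] at hi
        linarith
    · rintro ⟨h1, h2⟩
      rw [mem_realAxis] at h1
      rw [mem_imagAxis] at h2
      funext j
      have hx : (A *ᵥ x) j = (A *ᵥ u) j + (A *ᵥ v) j := by
        rw [hxuv, Matrix.mulVec_add]; rfl
      cases j with
      | inl i =>
        rw [Imat_mulVec_inl, hx]
        simp [h2 i]
      | inr i =>
        rw [Imat_mulVec_inr, hx]
        simp [h1 i]
  -- membership in kernel
  have kermem : ∀ x, x ∈ LinearMap.ker (Ψ T - 1).mulVecLin ↔ Ψ T *ᵥ x = x := by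
    intro x
    rw [LinearMap.mem_ker, Matrix.mulVecLin_apply, Matrix.sub_mulVec, Matrix.one_mulVec,
      sub_eq_zero]
  -- injectivity of A on vectors
  have hAinj : ∀ y : (Fin n ⊕ Fin n) → ℝ, A *ᵥ y = 0 → y = 0 := by
    intro y hy
    have : A⁻¹ *ᵥ (A *ᵥ y) = 0 := by rw [hy, Matrix.mulVec_zero]
    rwa [Matrix.mulVec_mulVec, hAinv, Matrix.one_mulVec] at this
  constructor
  · intro hker
    constructor
    · rw [Submodule.eq_bot_iff]
      rintro w ⟨⟨u, hu, rfl⟩, hw2⟩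
      rw [Matrix.mulVecLin_apply]
      have huu : Sum.elim (u ∘ Sum.inl) 0 = u := by
        funext j
        cases j with
        | inl i => simp
        | inr i => simp [(mem_realAxis n u).1 hu i]
      have hfix : Ψ T *ᵥ u = u := by
        rw [key, key2, huu]
        refine ⟨by rwa [Matrix.mulVecLin_apply] at hw2, ?_⟩
        have : Sum.elim (0 : Fin n → ℝ) (u ∘ Sum.inr) = (0 : (Fin n ⊕ Fin n) → ℝ) := by
          funext j
          cases j with
          | inl i => simp
          | inr i => simp [(mem_realAxis n u).1 hu i]
        rw [this, Matrix.mulVec_zero]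
        exact (imagAxis n).zero_mem
      have : u = 0 := by
        rw [Submodule.eq_bot_iff] at hker
        exact hker u ((kermem u).2 hfix)
      rw [this, Matrix.mulVec_zero]
    · rw [Submodule.eq_bot_iff]
      rintro w ⟨⟨v, hv, rfl⟩, hw2⟩
      rw [Matrix.mulVecLin_apply]
      have hvv : Sum.elim (0 : Fin n → ℝ) (v ∘ Sum.inr) = v := by
        funext j
        cases j with
        | inl i => simp [(mem_imagAxis n v).1 hv i]
        | inr i => simp
      have hfix : Ψ T *ᵥ v = v := by
        rw [key, key2, hvv]
        refine ⟨?_, by rwa [Matrix.mulVecLin_apply] at hw2⟩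
        have : Sum.elim (v ∘ Sum.inl) (0 : Fin n → ℝ) = (0 : (Fin n ⊕ Fin n) → ℝ) := by
          funext j
          cases j with
          | inl i => simp [(mem_imagAxis n v).1 hv i]
          | inr i => simp
        rw [this, Matrix.mulVec_zero]
        exact (realAxis n).zero_mem
      have : v = 0 := by
        rw [Submodule.eq_bot_iff] at hker
        exact hker v ((kermem v).2 hfix)
      rw [this, Matrix.mulVec_zero]
  · rintro ⟨hre, him⟩
    rw [Submodule.eq_bot_iff]
    intro x hx
    rw [kermem, key, key2] at hx
    obtain ⟨h1, h2⟩ := hx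
    set u : (Fin n ⊕ Fin n) → ℝ := Sum.elim (x ∘ Sum.inl) 0 with hu
    set v : (Fin n ⊕ Fin n) → ℝ := Sum.elim 0 (x ∘ Sum.inr) with hv
    have humem : u ∈ realAxis n := by rw [mem_realAxis]; intro i; simp [hu]
    have hvmem : v ∈ imagAxis n := by rw [mem_imagAxis]; intro i; simp [hv]
    have hAu : A *ᵥ u = 0 := by
      rw [Submodule.eq_bot_iff] at hre
      exact hre _ ⟨⟨u, humem, by rw [Matrix.mulVecLin_apply]⟩, h1⟩
    have hAv : A *ᵥ v = 0 := by
      rw [Submodule.eq_bot_iff] at him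
      exact him _ ⟨⟨v, hvmem, by rw [Matrix.mulVecLin_apply]⟩, h2⟩
    have hu0 := hAinj u hAu
    have hv0 := hAinj v hAv
    funext j
    cases j with
    | inl i => simpa [hu] using congrFun hu0 (Sum.inl i)
    | inr i => simpa [hv] using congrFun hv0 (Sum.inr i)
end

section
/- Let T > 0, let S : ℝ → Mat₂(ℝ) be continuous with each S(t) symmetric, S(−t) = I · S(t) · I and S(t + T) = S(t) for all t ∈ ℝ, and let λ ∈ ℝ. Suppose γ : [0, T/2] → ℝ² is differentiable and satisfies −J₀ γ′(t) − S(t) γ(t) = λ γ(t) for all t ∈ [0, T/2]. Define δ : [T/2, T] → ℝ² by δ(t) := I γ(T − t). Then −J₀ δ′(t) − S(t) δ(t) = λ δ(t) for all t ∈ [T/2, T]; moreover, if γ(T/2) ∈ ℝ × {0} then δ(T/2) = γ(T/2), and if γ(0) ∈ ℝ × {0} then δ(T) = γ(0), so the concatenation of γ and δ is a continuous solution on [0, T]. -/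
open Matrix Set

/-- The standard complex structure `J₀` on `ℝ²`. -/
noncomputable def J₀ : Matrix (Fin 2) (Fin 2) ℝ := !![0, -1; 1, 0]

/-- The reflection `I = diag(1, -1)` on `ℝ²`. -/
noncomputable def I2 : Matrix (Fin 2) (Fin 2) ℝ := !![1, 0; 0, -1]

lemma I2_mul_I2 : I2 * I2 = 1 := by
  simp [I2, Matrix.mul_fin_two, Matrix.one_fin_two]

lemma J₀_mul_I2 : J₀ * I2 = -(I2 * J₀) := by
  simp [I2, J₀, Matrix.mul_fin_two]

lemma I2_fix (v : Fin 2 → ℝ) (h : v 1 = 0) : I2.mulVec v = v := by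
  funext i; fin_cases i <;>
    simp [I2, Matrix.mulVec, dotProduct, Fin.sum_univ_two, h]

/-- If `γ` solves `-J₀ γ' - S γ = λ γ` on `[0, T/2]` (with `S` symmetric,
`S(-t) = I S(t) I`, `T`-periodic), then `δ(t) = I γ(T - t)` solves the same equation
on `[T/2, T]`, with matching endpoints when `γ(T/2)` resp. `γ(0)` lie on the real axis. -/
theorem stmt9 (T : ℝ) (hT : 0 < T)
    (S : ℝ → Matrix (Fin 2) (Fin 2) ℝ)
    (hScont : ∀ i j, Continuous fun t => S t i j)
    (hSsymm : ∀ t, (S t)ᵀ = S t)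
    (hSsym : ∀ t, S (-t) = I2 * S t * I2)
    (hSper : ∀ t, S (t + T) = S t)
    (lam : ℝ)
    (γ γ' : ℝ → Fin 2 → ℝ)
    (hγd : ∀ t ∈ Icc (0 : ℝ) (T / 2), HasDerivWithinAt γ (γ' t) (Icc 0 (T / 2)) t)
    (hγeq : ∀ t ∈ Icc (0 : ℝ) (T / 2),
      -(J₀.mulVec (γ' t)) - (S t).mulVec (γ t) = lam • γ t)
    (δ : ℝ → Fin 2 → ℝ)
    (hδ : ∀ t, δ t = I2.mulVec (γ (T - t))) :
    (∀ t ∈ Icc (T / 2) T,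
        HasDerivWithinAt δ (-(I2.mulVec (γ' (T - t)))) (Icc (T / 2) T) t ∧
        -(J₀.mulVec (-(I2.mulVec (γ' (T - t))))) - (S t).mulVec (δ t) = lam • δ t) ∧
      (γ (T / 2) 1 = 0 → δ (T / 2) = γ (T / 2)) ∧
      (γ 0 1 = 0 → δ T = γ 0) := by
  have hmaps : MapsTo (fun t => T - t) (Icc (T/2) T) (Icc 0 (T/2)) := by
    intro x hx; simp only [mem_Icc] at hx ⊢; constructor <;> linarith [hx.1, hx.2]
  refine ⟨fun t ht => ?_, fun h => ?_, fun h => ?_⟩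
  · constructor
    · have h1 : HasDerivWithinAt (fun t : ℝ => T - t) (-1) (Icc (T/2) T) t := by
        simpa using ((hasDerivWithinAt_id t _).const_sub T)
      have h2 := (hγd (T - t) (hmaps ht)).scomp t h1 hmaps
      have h3 := (Matrix.mulVecLin I2).toContinuousLinearMap.hasFDerivAt.comp_hasDerivWithinAt t h2
      have h4 : HasDerivWithinAt (fun t => I2.mulVec (γ (T - t)))
          (-(I2.mulVec (γ' (T - t)))) (Icc (T / 2) T) t := by
        simpa [Function.comp_def, Matrix.mulVec_neg] using h3
      have : δ = fun t => I2.mulVec (γ (T - t)) := funext hδ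
      rw [this]; exact h4
    · have hSt : S t = I2 * S (T - t) * I2 := by
        have h0 : S (-(T - t) + T) = I2 * S (T - t) * I2 := by rw [hSper, hSsym]
        rw [← h0]; congr 1; ring
      have hkey : (I2 * S (T - t) * I2).mulVec (I2.mulVec (γ (T - t)))
          = I2.mulVec ((S (T - t)).mulVec (γ (T - t))) := by
        rw [Matrix.mulVec_mulVec, Matrix.mul_assoc, Matrix.mul_assoc, I2_mul_I2,
          Matrix.mul_one, ← Matrix.mulVec_mulVec]
      have hJ : -(J₀.mulVec (-(I2.mulVec (γ' (T - t)))))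
          = -(I2.mulVec (J₀.mulVec (γ' (T - t)))) := by
        rw [Matrix.mulVec_neg, neg_neg, Matrix.mulVec_mulVec, J₀_mul_I2,
          Matrix.neg_mulVec, ← Matrix.mulVec_mulVec]
      rw [hδ, hSt, hkey, hJ, ← Matrix.mulVec_neg, ← Matrix.mulVec_sub,
        ← Matrix.mulVec_smul]
      exact congrArg I2.mulVec (hγeq (T - t) (hmaps ht))
  · rw [hδ]
    have : T - T / 2 = T / 2 := by ring
    rw [this, I2_fix _ h]
  · rw [hδ]
    simp only [sub_self]
    rw [I2_fix _ h]
end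

section
/- Identify ℂ² with ℝ⁴ via coordinates p = (x₁, y₁, x₂, y₂). Define the 1-form λ on ℝ⁴ by λ(p)(v) = (1/2)(p₁ v₂ − p₂ v₁ + p₃ v₄ − p₄ v₃) for v = (v₁, v₂, v₃, v₄) ∈ ℝ⁴, and the 1-form λ_FS on ℝ⁴ by λ_FS(p)(v) = λ(p)(v)/(1 + ‖p‖²). Let B = {p ∈ ℝ⁴ : ‖p‖ < 1} be the open unit ball and define 𝒮 : B → ℝ⁴ by 𝒮(p) = p/√(1 − ‖p‖²). Then 𝒮 is differentiable on B and for every p ∈ B and every v ∈ ℝ⁴: λ_FS(𝒮(p))(D𝒮(p) · v) = λ(p)(v); that is, 𝒮*λ_FS = λ on B. -/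
/-- The standard Liouville 1-form `λ(p)(v) = (1/2)(x₁ dy₁ - y₁ dx₁ + x₂ dy₂ - y₂ dx₂)`
on `ℂ² ≅ ℝ⁴`, with coordinates `p = (x₁, y₁, x₂, y₂)`. -/
noncomputable def lamStd (p v : EuclideanSpace ℝ (Fin 4)) : ℝ :=
  (1 / 2) * (p 0 * v 1 - p 1 * v 0 + p 2 * v 3 - p 3 * v 2)

/-- The Fubini-Study primitive `λ_FS(p)(v) = λ(p)(v) / (1 + ‖p‖²)`. -/
noncomputable def lamFS (p v : EuclideanSpace ℝ (Fin 4)) : ℝ :=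
  lamStd p v / (1 + ‖p‖ ^ 2)

/-- The map `𝒮(p) = p / √(1 - ‖p‖²)` on the open unit ball. -/
noncomputable def Smap (p : EuclideanSpace ℝ (Fin 4)) : EuclideanSpace ℝ (Fin 4) :=
  (1 / Real.sqrt (1 - ‖p‖ ^ 2)) • p

/-- `𝒮` is differentiable on the open unit ball and pulls back `λ_FS` to `λ`:
`λ_FS(𝒮(p))(D𝒮(p)·v) = λ(p)(v)` for all `p` in the ball and all `v`. -/
theorem stmt14 (p : EuclideanSpace ℝ (Fin 4)) (hp : ‖p‖ < 1) :
    DifferentiableAt ℝ Smap p ∧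
      ∀ v : EuclideanSpace ℝ (Fin 4), lamFS (Smap p) (fderiv ℝ Smap p v) = lamStd p v := by
  have hr2 : ‖p‖ ^ 2 < 1 := by
    have := pow_lt_one₀ (norm_nonneg p) hp (two_ne_zero)
    simpa using this
  have h1 : 0 < 1 - ‖p‖ ^ 2 := by linarith
  have hs : 0 < Real.sqrt (1 - ‖p‖ ^ 2) := Real.sqrt_pos.2 h1
  -- derivative of the norm-square
  have hns : HasFDerivAt (fun x : EuclideanSpace ℝ (Fin 4) => ‖x‖ ^ 2)
      (2 • (innerSL ℝ p)) p := by
    simpa using (hasFDerivAt_id p).norm_sq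
  -- derivative of t ↦ 1 / sqrt (1 - t) at ‖p‖²
  have hg : HasDerivAt (fun t : ℝ => 1 / Real.sqrt (1 - t))
      (-(-1 * (1 / (2 * Real.sqrt (1 - ‖p‖ ^ 2)))) / Real.sqrt (1 - ‖p‖ ^ 2) ^ 2)
      (‖p‖ ^ 2) := by
    have h1' : HasDerivAt (fun t : ℝ => 1 - t) (-1) (‖p‖ ^ 2) := by
      exact (hasDerivAt_id (‖p‖ ^ 2)).const_sub 1
    have h2 : HasDerivAt (fun t : ℝ => Real.sqrt (1 - t))
        (1 / (2 * Real.sqrt (1 - ‖p‖ ^ 2)) * -1) (‖p‖ ^ 2) :=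
      (Real.hasDerivAt_sqrt (ne_of_gt h1)).comp _ h1'
    have h3 := h2.inv (ne_of_gt hs)
    have h4 : HasDerivAt (fun t : ℝ => (Real.sqrt (1 - t))⁻¹) _ (‖p‖ ^ 2) := h3
    simpa [one_div, mul_comm] using h4
  set g' : ℝ := -(-1 * (1 / (2 * Real.sqrt (1 - ‖p‖ ^ 2)))) / Real.sqrt (1 - ‖p‖ ^ 2) ^ 2
  have hc : HasFDerivAt (fun x : EuclideanSpace ℝ (Fin 4) => 1 / Real.sqrt (1 - ‖x‖ ^ 2))
      (g' • (2 • (innerSL ℝ p))) p :=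
      HasDerivAt.comp_hasFDerivAt (h₂ := fun t : ℝ => 1 / Real.sqrt (1 - t))
        (f := fun x : EuclideanSpace ℝ (Fin 4) => ‖x‖ ^ 2) p hg hns
  set a : ℝ := 1 / Real.sqrt (1 - ‖p‖ ^ 2) with ha
  have hS : HasFDerivAt Smap
      (a • (ContinuousLinearMap.id ℝ (EuclideanSpace ℝ (Fin 4))) +
        (g' • (2 • (innerSL ℝ p))).smulRight p) p := by
    unfold Smap
    exact hc.smul (hasFDerivAt_id p)
  have hdiff : DifferentiableAt ℝ Smap p := hS.differentiableAt
  refine ⟨hdiff, fun v => ?_⟩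
  have hD : fderiv ℝ Smap p v = a • v + ((g' • (2 • (innerSL ℝ p))) v) • p := by
    rw [hS.fderiv]; rfl
  set b : ℝ := (g' • (2 • (innerSL ℝ p))) v
  have ha2 : a ^ 2 = (1 - ‖p‖ ^ 2)⁻¹ := by
    rw [ha, div_pow, one_pow, Real.sq_sqrt (le_of_lt h1), one_div]
  have hnormS : ‖Smap p‖ ^ 2 = a ^ 2 * ‖p‖ ^ 2 := by
    rw [Smap, norm_smul, mul_pow, ← ha, Real.norm_eq_abs, sq_abs]
  rw [hD, lamFS, hnormS, ha2]
  have hcoord : ∀ i, (a • v + b • p) i = a * v i + b * p i := fun i => rfl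
  have hScoord : ∀ i, Smap p i = a * p i := fun i => rfl
  simp only [lamStd, hcoord, hScoord]
  have hden : 1 + (1 - ‖p‖ ^ 2)⁻¹ * ‖p‖ ^ 2 = (1 - ‖p‖ ^ 2)⁻¹ := by
    field_simp
    ring
  rw [hden]
  have : (1:ℝ) / 2 * (a * p 0 * (a * v 1 + b * p 1) - a * p 1 * (a * v 0 + b * p 0) +
      a * p 2 * (a * v 3 + b * p 3) - a * p 3 * (a * v 2 + b * p 2)) =
      a ^ 2 * ((1:ℝ) / 2 * (p 0 * v 1 - p 1 * v 0 + p 2 * v 3 - p 3 * v 2)) := by ring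
  rw [this, ha2, div_eq_iff (by positivity : ((1:ℝ) - ‖p‖ ^ 2)⁻¹ ≠ 0)]
  ring
end
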